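/- For every real P > 0 and every integer J ≥ 2, the unique solution β ∈ [1, J] of (1 + J·P·β)^(J−1) = (1 + P·β·(J−β))^J satisfies the strict inequality (J − 2β)·(1 + J·P·β) < (J−1)·(1 + P·β·(J−β)); consequently λ* = (1 − (J − 2β)(1 + J·P·β) / ((J−1)(1 + P·β·(J−β))))^(−1) is well-defined and strictly positive. -/
import Mathlib


/-- For `P > 0` and integer `J ≥ 2`, the unique solution `β ∈ [1, J]` of
`(1 + J·P·β)^(J−1) = (1 + P·β·(J−β))^J` satisfies
`(J − 2β)·(1 + J·P·β) < (J−1)·(1 + P·β·(J−β))`; consequently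
`λ* = (1 − (J − 2β)(1 + J·P·β)/((J−1)(1 + P·β·(J−β))))⁻¹` is strictly positive. -/
theorem stmt_5 (P : ℝ) (hP : 0 < P) (J : ℕ) (hJ : 2 ≤ J) (β : ℝ)
    (hβ : β ∈ Set.Icc (1 : ℝ) (J : ℝ))
    (heq : (1 + (J : ℝ) * P * β) ^ (J - 1) = (1 + P * β * ((J : ℝ) - β)) ^ J) :
    ((J : ℝ) - 2 * β) * (1 + (J : ℝ) * P * β)
        < ((J : ℝ) - 1) * (1 + P * β * ((J : ℝ) - β)) ∧
      0 < (1 - ((J : ℝ) - 2 * β) * (1 + (J : ℝ) * P * β) /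
        (((J : ℝ) - 1) * (1 + P * β * ((J : ℝ) - β))))⁻¹ := by
  obtain ⟨h1, h2⟩ := hβ
  have hJ2 : (2 : ℝ) ≤ (J : ℝ) := by exact_mod_cast hJ
  have hlt : ((J : ℝ) - 2 * β) * (1 + (J : ℝ) * P * β)
      < ((J : ℝ) - 1) * (1 + P * β * ((J : ℝ) - β)) := by
    nlinarith [mul_nonneg (mul_nonneg hP.le (by linarith : (0:ℝ) ≤ β))
      (by nlinarith : (0:ℝ) ≤ (J : ℝ) * (β - 1) + β)]
  refine ⟨hlt, ?_⟩
  have hBpos : 0 < ((J : ℝ) - 1) * (1 + P * β * ((J : ℝ) - β)) := by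
    have : 0 ≤ P * β * ((J : ℝ) - β) := mul_nonneg (mul_nonneg hP.le (by linarith)) (by linarith)
    nlinarith
  have : ((J : ℝ) - 2 * β) * (1 + (J : ℝ) * P * β) /
      (((J : ℝ) - 1) * (1 + P * β * ((J : ℝ) - β))) < 1 :=
    (div_lt_one hBpos).mpr hlt
  have h3 : 0 < 1 - ((J : ℝ) - 2 * β) * (1 + (J : ℝ) * P * β) /
      (((J : ℝ) - 1) * (1 + P * β * ((J : ℝ) - β))) := by linarith
  exact inv_pos.mpr h3
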